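/- Let A ∈ ℝ^{n×n} be symmetric positive-definite, M_0 ∈ ℝ^{n×n}, R_0 := I_n − A M_0, G_0 := −A R_0, and i ≥ 1. Then a matrix M* ∈ M_0 + K_i(A², G_0) satisfies the Galerkin condition (I_n − AM*, V)_F = 0 for all V ∈ K_i(A², G_0) if and only if M* minimizes the A-weighted Frobenius norm of the error over the affine Krylov subspace: ‖A⁻¹ − M*‖_{F,A} = min { ‖A⁻¹ − M‖_{F,A} : M ∈ M_0 + K_i(A², G_0) }. -/

import Mathlib

open Matrix

/-- Frobenius inner product `(X,Y)_F = trace (Xᵀ Y)`. -/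
noncomputable def finner {n : ℕ} (X Y : Matrix (Fin n) (Fin n) ℝ) : ℝ :=
  (Xᵀ * Y).trace

/-- Frobenius norm `‖X‖_F`. -/
noncomputable def fnorm {n : ℕ} (X : Matrix (Fin n) (Fin n) ℝ) : ℝ :=
  Real.sqrt (finner X X)

/-- A-weighted Frobenius inner product `(X,Y)_{F,A} = trace (Xᵀ A Y)`. -/
noncomputable def finnerA {n : ℕ} (A X Y : Matrix (Fin n) (Fin n) ℝ) : ℝ :=
  (Xᵀ * A * Y).trace

/-- A-weighted Frobenius norm `‖X‖_{F,A}`. -/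
noncomputable def fnormA {n : ℕ} (A X : Matrix (Fin n) (Fin n) ℝ) : ℝ :=
  Real.sqrt (finnerA A X X)

/-- Krylov subspace `K_i(B, X) = span {X, BX, …, B^(i-1) X}`. -/
noncomputable def krylov {n : ℕ} (i : ℕ) (B X : Matrix (Fin n) (Fin n) ℝ) :
    Submodule ℝ (Matrix (Fin n) (Fin n) ℝ) :=
  Submodule.span ℝ {Y | ∃ j < i, Y = B ^ j * X}

section aux

variable {n : ℕ}

lemma finnerA_add_left (A X Y Z : Matrix (Fin n) (Fin n) ℝ) :
    finnerA A (X + Y) Z = finnerA A X Z + finnerA A Y Z := by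
  simp [finnerA, Matrix.transpose_add, Matrix.add_mul]

lemma finnerA_sub_left (A X Y Z : Matrix (Fin n) (Fin n) ℝ) :
    finnerA A (X - Y) Z = finnerA A X Z - finnerA A Y Z := by
  simp [finnerA, Matrix.transpose_sub, Matrix.sub_mul]

lemma finnerA_add_right (A X Y Z : Matrix (Fin n) (Fin n) ℝ) :
    finnerA A X (Y + Z) = finnerA A X Y + finnerA A X Z := by
  simp [finnerA, Matrix.mul_add]

lemma finnerA_smul_right (A X Y : Matrix (Fin n) (Fin n) ℝ) (c : ℝ) :
    finnerA A X (c • Y) = c * finnerA A X Y := by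
  simp [finnerA, Matrix.mul_smul]

lemma finnerA_smul_left (A X Y : Matrix (Fin n) (Fin n) ℝ) (c : ℝ) :
    finnerA A (c • X) Y = c * finnerA A X Y := by
  simp [finnerA, Matrix.transpose_smul, Matrix.smul_mul]

lemma finnerA_comm {A : Matrix (Fin n) (Fin n) ℝ} (hs : Aᵀ = A)
    (X Y : Matrix (Fin n) (Fin n) ℝ) : finnerA A X Y = finnerA A Y X := by
  unfold finnerA
  rw [← Matrix.trace_transpose, Matrix.transpose_mul, Matrix.transpose_mul,
    Matrix.transpose_transpose, hs, ← Matrix.mul_assoc]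

lemma finnerA_self_nonneg {A : Matrix (Fin n) (Fin n) ℝ} (hA : A.PosSemidef)
    (X : Matrix (Fin n) (Fin n) ℝ) : 0 ≤ finnerA A X X := by
  have key : finnerA A X X =
      ∑ j, (fun k => X k j) ⬝ᵥ A *ᵥ (fun k => X k j) := by
    unfold finnerA
    rw [Matrix.trace]
    refine Finset.sum_congr rfl fun j _ => ?_
    simp only [Matrix.diag, Matrix.mul_apply, Matrix.transpose_apply, dotProduct,
      Matrix.mulVec, Finset.sum_mul, Finset.mul_sum]
    rw [Finset.sum_comm]
    exact Finset.sum_congr rfl fun k _ => Finset.sum_congr rfl fun l _ => by ring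
  rw [key]
  refine Finset.sum_nonneg fun j _ => ?_
  simpa using hA.dotProduct_mulVec_nonneg (fun k => X k j)

lemma quad_nonneg_imp_zero (b c : ℝ) (hc : 0 ≤ c)
    (h : ∀ t : ℝ, 0 ≤ t ^ 2 * c - 2 * t * b) : b = 0 := by
  rcases eq_or_lt_of_le hc with hc0 | hcpos
  · have ht := h b
    nlinarith
  · have ht := h (b / c)
    have hne : (b / c) ^ 2 * c - 2 * (b / c) * b = -(b ^ 2) / c := by
      field_simp; ring
    rw [hne] at ht
    rcases div_nonneg_iff.mp ht with ⟨h1, _⟩ | ⟨_, h2⟩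
    · nlinarith [sq_nonneg b]
    · linarith

end aux

/-- Optimality of NCG iterates: a matrix in the affine Krylov subspace of A²
satisfies the Galerkin condition iff it minimizes the A-weighted Frobenius norm
of the error over that affine subspace. -/
theorem ncg_galerkin_iff_optimal {n : ℕ}
    (A M₀ Mstar : Matrix (Fin n) (Fin n) ℝ) (hA : A.PosDef)
    (R₀ G₀ : Matrix (Fin n) (Fin n) ℝ)
    (hR₀ : R₀ = 1 - A * M₀) (hG₀ : G₀ = -(A * R₀))
    (i : ℕ) (hi : 1 ≤ i)
    (hMstar : ∃ V ∈ krylov i (A ^ 2) G₀, Mstar = M₀ + V) :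
    (∀ V ∈ krylov i (A ^ 2) G₀, finner (1 - A * Mstar) V = 0) ↔
      (∀ M : Matrix (Fin n) (Fin n) ℝ, (∃ V ∈ krylov i (A ^ 2) G₀, M = M₀ + V) →
        fnormA A (A⁻¹ - Mstar) ≤ fnormA A (A⁻¹ - M)) := by
  obtain ⟨Vs, hVs, hMs⟩ := hMstar
  have hs : Aᵀ = A := by
    ext i j
    simpa [Matrix.conjTranspose_apply] using (congrFun (congrFun hA.isHermitian.eq j) i).symm
  have hAinv : A * A⁻¹ = 1 := Matrix.mul_nonsing_inv A (hA.det_pos.ne'.isUnit)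
  set E : Matrix (Fin n) (Fin n) ℝ := A⁻¹ - Mstar with hE
  have hres : 1 - A * Mstar = A * E := by
    rw [hE, Matrix.mul_sub, hAinv]
  -- finner (1 - A Mstar) V = finnerA A E V
  have hkey : ∀ V : Matrix (Fin n) (Fin n) ℝ,
      finner (1 - A * Mstar) V = finnerA A E V := by
    intro V
    rw [hres]
    unfold finner finnerA
    rw [Matrix.transpose_mul, hs, Matrix.mul_assoc]
  constructor
  · intro hG M hM
    obtain ⟨W, hW, hMW⟩ := hM
    have hD : Vs - W ∈ krylov i (A ^ 2) G₀ := sub_mem hVs hW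
    have hEM : A⁻¹ - M = E + (Vs - W) := by
      rw [hMW, hE, hMs]; abel
    have horth : finnerA A E (Vs - W) = 0 := by
      rw [← hkey]; exact hG _ hD
    have horth' : finnerA A (Vs - W) E = 0 := by
      rw [finnerA_comm hs]; exact horth
    unfold fnormA
    apply Real.sqrt_le_sqrt
    rw [hEM, finnerA_add_left, finnerA_add_right, finnerA_add_right, horth, horth']
    have := finnerA_self_nonneg hA.posSemidef (Vs - W)
    linarith
  · intro hmin V hV
    rw [hkey]
    have hb0 : ∀ t : ℝ, 0 ≤ t ^ 2 * finnerA A V V - 2 * t * finnerA A E V := by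
      intro t
      have hmem : Vs + t • V ∈ krylov i (A ^ 2) G₀ :=
        add_mem hVs (Submodule.smul_mem _ _ hV)
      have h1 := hmin (M₀ + (Vs + t • V)) ⟨_, hmem, rfl⟩
      have hEM : A⁻¹ - (M₀ + (Vs + t • V)) = E - t • V := by
        rw [hE, hMs]; abel
      rw [hEM] at h1
      unfold fnormA at h1
      have h2 : finnerA A E E ≤ finnerA A (E - t • V) (E - t • V) := by
        have hn1 : 0 ≤ finnerA A E E := finnerA_self_nonneg hA.posSemidef E
        have hn2 : 0 ≤ finnerA A (E - t • V) (E - t • V) :=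
          finnerA_self_nonneg hA.posSemidef (E - t • V)
        exact (Real.sqrt_le_sqrt_iff hn2).mp h1
      have hexp : finnerA A (E - t • V) (E - t • V)
          = finnerA A E E - 2 * t * finnerA A E V + t ^ 2 * finnerA A V V := by
        rw [finnerA_sub_left]
        have h3 : finnerA A E (E - t • V) = finnerA A E E - t * finnerA A E V := by
          rw [show E - t • V = E + (-t) • V by module, finnerA_add_right,
            finnerA_smul_right]; ring
        have h4 : finnerA A (t • V) (E - t • V)
            = t * finnerA A E V - t ^ 2 * finnerA A V V := by
          rw [finnerA_smul_left, show E - t • V = E + (-t) • V by module,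
            finnerA_add_right, finnerA_smul_right, finnerA_comm hs V E]
          ring
        rw [h3, h4]; ring
      rw [hexp] at h2
      linarith
    exact quad_nonneg_imp_zero _ _ (finnerA_self_nonneg hA.posSemidef V) hb0
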